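/- For every λ ∈ ℝ^n and all integers 0 ≤ l < k ≤ n, the polynomial identity ∑_{i=1}^n [ σ_{k−1}(λ|i) σ_l(λ) − σ_k(λ) σ_{l−1}(λ|i) ] λ_i² = (l+1) σ_k(λ) σ_{l+1}(λ) − (k+1) σ_{k+1}(λ) σ_l(λ) holds, with the conventions σ_{−1} = 0 and σ_{n+1} = 0. -/

import Mathlib

/-- The `k`-th elementary symmetric function of `x` restricted to the index set `s`. -/
noncomputable def sigmaEOn {ι : Type*} [DecidableEq ι] (s : Finset ι) (k : ℕ) (x : ι → ℝ) : ℝ :=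
  ∑ t ∈ s.powersetCard k, ∏ i ∈ t, x i

/-- The `k`-th elementary symmetric function `σ_k(x)`. -/
noncomputable def sigmaE {ι : Type*} [Fintype ι] [DecidableEq ι] (k : ℕ) (x : ι → ℝ) : ℝ :=
  sigmaEOn Finset.univ k x

/-- The Gårding cone `Γ_k ⊆ ℝ^n`. -/
def gardingCone (n k : ℕ) : Set (Fin n → ℝ) :=
  {lam | ∀ j : ℕ, 1 ≤ j → j ≤ k → 0 < sigmaE j lam}

/-- Elementary symmetric function with integer index: `σ_j = 0` for `j < 0`. -/
noncomputable def sigmaEIntOn {ι : Type*} [DecidableEq ι] (s : Finset ι) (k : ℤ) (x : ι → ℝ) : ℝ :=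
  if 0 ≤ k then sigmaEOn s k.toNat x else 0

noncomputable def sigmaEInt {ι : Type*} [Fintype ι] [DecidableEq ι] (k : ℤ) (x : ι → ℝ) : ℝ :=
  sigmaEIntOn Finset.univ k x

open Finset

lemma sigmaE_split {n : ℕ} (i : Fin n) (m : ℕ) (lam : Fin n → ℝ) :
    sigmaE (m+1) lam
      = sigmaEOn (univ.erase i) (m+1) lam + lam i * sigmaEOn (univ.erase i) m lam := by
  classical
  have hi : i ∉ univ.erase i := notMem_erase i univ
  have hu : (univ : Finset (Fin n)) = insert i (univ.erase i) := (insert_erase (mem_univ i)).symm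
  unfold sigmaE sigmaEOn
  conv_lhs => rw [hu]
  rw [powersetCard_succ_insert hi, sum_union, sum_image]
  · congr 1
    rw [mul_sum]
    refine sum_congr rfl fun t ht => ?_
    rw [mem_powersetCard] at ht
    have : i ∉ t := fun h => hi (ht.1 h)
    rw [prod_insert this]
  · intro t ht t' ht' h
    rw [mem_coe, mem_powersetCard] at ht ht'
    have h1 : i ∉ t := fun h => hi (ht.1 h)
    have h2 : i ∉ t' := fun h => hi (ht'.1 h)
    have := congrArg (fun s => s.erase i) h
    simpa [erase_insert h1, erase_insert h2] using this
  · rw [disjoint_left]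
    intro t ht ht'
    rw [mem_powersetCard] at ht
    rw [mem_image] at ht'
    obtain ⟨u, hu', rfl⟩ := ht'
    exact hi (ht.1 (mem_insert_self i u))

lemma sum_sigmaEOn_erase {n : ℕ} (j : ℕ) (lam : Fin n → ℝ) :
    ∑ i : Fin n, sigmaEOn (univ.erase i) j lam = ((n : ℝ) - j) * sigmaE j lam := by
  classical
  unfold sigmaE sigmaEOn
  have key : ∀ i : Fin n, (univ.erase i).powersetCard j
      = (univ.powersetCard j).filter (fun t => i ∉ t) := by
    intro i
    ext t
    simp [mem_powersetCard, subset_erase, and_comm, and_assoc]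
  calc ∑ i : Fin n, ∑ t ∈ (univ.erase i).powersetCard j, ∏ a ∈ t, lam a
      = ∑ i : Fin n, ∑ t ∈ univ.powersetCard j, if i ∉ t then ∏ a ∈ t, lam a else 0 := by
        refine sum_congr rfl fun i _ => ?_
        rw [key i, sum_filter]
    _ = ∑ t ∈ univ.powersetCard j, ∑ i : Fin n, if i ∉ t then ∏ a ∈ t, lam a else 0 :=
        sum_comm
    _ = ∑ t ∈ univ.powersetCard j, ((n : ℝ) - j) * ∏ a ∈ t, lam a := by
        refine sum_congr rfl fun t ht => ?_
        rw [mem_powersetCard] at ht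
        have hjn : j ≤ n := by
          have h2 := card_le_card ht.1
          rw [ht.2, card_univ, Fintype.card_fin] at h2
          exact h2
        rw [sum_ite, sum_const, sum_const_zero, add_zero]
        have hfil : univ.filter (fun i => i ∉ t) = tᶜ := by ext a; simp
        rw [hfil, card_compl, ht.2, nsmul_eq_mul, Fintype.card_fin, Nat.cast_sub hjn]
    _ = ((n : ℝ) - j) * ∑ t ∈ univ.powersetCard j, ∏ a ∈ t, lam a := by rw [mul_sum]

lemma sigmaE_zero {n : ℕ} (lam : Fin n → ℝ) : sigmaE 0 lam = 1 := by
  simp [sigmaE, sigmaEOn]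

lemma sigmaE_one {n : ℕ} (lam : Fin n → ℝ) : sigmaE 1 lam = ∑ i : Fin n, lam i := by
  simp [sigmaE, sigmaEOn, powersetCard_one]

lemma sum_lam_sigmaEOn_erase {n : ℕ} (m : ℕ) (lam : Fin n → ℝ) :
    ∑ i : Fin n, lam i * sigmaEOn (univ.erase i) m lam
      = ((m : ℝ) + 1) * sigmaE (m+1) lam := by
  calc ∑ i : Fin n, lam i * sigmaEOn (univ.erase i) m lam
      = ∑ i : Fin n, (sigmaE (m+1) lam - sigmaEOn (univ.erase i) (m+1) lam) := by
        refine sum_congr rfl fun i _ => ?_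
        have h := sigmaE_split i m lam
        linarith
    _ = (n : ℝ) * sigmaE (m+1) lam - ((n : ℝ) - (m+1)) * sigmaE (m+1) lam := by
        rw [sum_sub_distrib, sum_const, sum_sigmaEOn_erase, card_univ, Fintype.card_fin,
          nsmul_eq_mul]
        push_cast
        ring
    _ = ((m : ℝ) + 1) * sigmaE (m+1) lam := by ring

lemma sum_sq_sigmaEOn_erase {n : ℕ} (m : ℕ) (lam : Fin n → ℝ) :
    ∑ i : Fin n, sigmaEOn (univ.erase i) m lam * lam i ^ 2
      = sigmaE 1 lam * sigmaE (m+1) lam - ((m : ℝ) + 2) * sigmaE (m+2) lam := by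
  calc ∑ i : Fin n, sigmaEOn (univ.erase i) m lam * lam i ^ 2
      = ∑ i : Fin n, (lam i * sigmaE (m+1) lam
          - lam i * sigmaEOn (univ.erase i) (m+1) lam) := by
        refine sum_congr rfl fun i _ => ?_
        have h := sigmaE_split i m lam
        linear_combination (-(lam i)) * h
    _ = (∑ i : Fin n, lam i) * sigmaE (m+1) lam
        - ((m : ℝ) + 2) * sigmaE (m+2) lam := by
        rw [sum_sub_distrib, ← sum_mul, sum_lam_sigmaEOn_erase (m+1) lam]
        push_cast
        ring
    _ = _ := by rw [sigmaE_one]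

/-- the polynomial identity
`∑_i [σ_{k−1}(λ|i) σ_l(λ) − σ_k(λ) σ_{l−1}(λ|i)] λ_i² =
  (l+1) σ_k(λ) σ_{l+1}(λ) − (k+1) σ_{k+1}(λ) σ_l(λ)`. -/
theorem sigma_quotient_identity (n k l : ℕ) (hlk : l < k) (hkn : k ≤ n)
    (lam : Fin n → ℝ) :
    ∑ i : Fin n,
        (sigmaEOn (Finset.univ.erase i) (k - 1) lam * sigmaE l lam
          - sigmaE k lam * sigmaEIntOn (Finset.univ.erase i) ((l : ℤ) - 1) lam) * lam i ^ 2
      = ((l : ℝ) + 1) * sigmaE k lam * sigmaE (l + 1) lam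
        - ((k : ℝ) + 1) * sigmaE (k + 1) lam * sigmaE l lam := by
  classical
  obtain ⟨k', rfl⟩ : ∃ k', k = k' + 1 := ⟨k - 1, by omega⟩
  simp only [Nat.add_sub_cancel]
  cases l with
  | zero =>
    have hInt : ∀ i : Fin n,
        sigmaEIntOn (univ.erase i) (((0:ℕ) : ℤ) - 1) lam = 0 := by
      intro i; simp [sigmaEIntOn]
    calc ∑ i : Fin n,
          (sigmaEOn (univ.erase i) k' lam * sigmaE 0 lam
            - sigmaE (k'+1) lam * sigmaEIntOn (univ.erase i) (((0:ℕ) : ℤ) - 1) lam) * lam i ^ 2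
        = ∑ i : Fin n, sigmaEOn (univ.erase i) k' lam * lam i ^ 2 := by
          refine sum_congr rfl fun i _ => ?_
          rw [hInt i, sigmaE_zero]
          ring
      _ = sigmaE 1 lam * sigmaE (k'+1) lam - ((k' : ℝ) + 2) * sigmaE (k'+2) lam :=
          sum_sq_sigmaEOn_erase k' lam
      _ = _ := by
          rw [sigmaE_zero]
          push_cast
          ring_nf
  | succ l' =>
    have hInt : ∀ i : Fin n,
        sigmaEIntOn (univ.erase i) (((l'+1:ℕ) : ℤ) - 1) lam
          = sigmaEOn (univ.erase i) l' lam := by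
      intro i
      have h1 : ((l'+1:ℕ) : ℤ) - 1 = (l' : ℤ) := by push_cast; ring
      rw [h1]
      simp [sigmaEIntOn]
    calc ∑ i : Fin n,
          (sigmaEOn (univ.erase i) k' lam * sigmaE (l'+1) lam
            - sigmaE (k'+1) lam * sigmaEIntOn (univ.erase i) (((l'+1:ℕ) : ℤ) - 1) lam) * lam i ^ 2
        = ∑ i : Fin n,
            (sigmaE (l'+1) lam * (sigmaEOn (univ.erase i) k' lam * lam i ^ 2)
              - sigmaE (k'+1) lam * (sigmaEOn (univ.erase i) l' lam * lam i ^ 2)) := by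
          refine sum_congr rfl fun i _ => ?_
          rw [hInt i]
          ring
      _ = sigmaE (l'+1) lam * (∑ i : Fin n, sigmaEOn (univ.erase i) k' lam * lam i ^ 2)
          - sigmaE (k'+1) lam * (∑ i : Fin n, sigmaEOn (univ.erase i) l' lam * lam i ^ 2) := by
          rw [sum_sub_distrib, mul_sum, mul_sum]
      _ = _ := by
          rw [sum_sq_sigmaEOn_erase k' lam, sum_sq_sigmaEOn_erase l' lam]
          push_cast
          ring_nf
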